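/- Assume a₂t² + b₂t + c₂ > 0 for all t ∈ ℝ and d̂ < 0. Then Δ = ê² − 4d̂f̂ > 0, and letting t_s = (−ê + √Δ)/(2d̂) and t_g = (−ê − √Δ)/(2d̂) (so t_s < t_g), the function R is strictly decreasing on (−∞, t_s], strictly increasing on [t_s, t_g], and strictly decreasing on [t_g, ∞); in particular t_s is a local minimizer and t_g a local maximizer of R. -/

import Mathlib

/-- Monotonicity of `R(t) = (a₁t²+b₁t+c₁)/(a₂t²+b₂t+c₂)` when `d̂ < 0`: the
discriminant `Δ = ê² − 4d̂f̂` is positive and, with `t_s = (−ê+√Δ)/(2d̂)` and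
`t_g = (−ê−√Δ)/(2d̂)`, `R` is strictly decreasing on `(−∞, t_s]`, strictly increasing on
`[t_s, t_g]`, and strictly decreasing on `[t_g, ∞)`; so `t_s` is a local minimizer and
`t_g` a local maximizer. -/
theorem stmt12 (a₁ b₁ c₁ a₂ b₂ c₂ : ℝ)
    (hden : ∀ t : ℝ, 0 < a₂ * t ^ 2 + b₂ * t + c₂)
    (R : ℝ → ℝ)
    (hR : R = fun t => (a₁ * t ^ 2 + b₁ * t + c₁) / (a₂ * t ^ 2 + b₂ * t + c₂))
    (dhat ehat fhat : ℝ)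
    (hd : dhat = a₁ * b₂ - a₂ * b₁)
    (he : ehat = 2 * (a₁ * c₂ - a₂ * c₁))
    (hf : fhat = b₁ * c₂ - b₂ * c₁)
    (hdneg : dhat < 0)
    (Δ : ℝ) (hΔdef : Δ = ehat ^ 2 - 4 * dhat * fhat)
    (ts tg : ℝ)
    (hts : ts = (-ehat + Real.sqrt Δ) / (2 * dhat))
    (htg : tg = (-ehat - Real.sqrt Δ) / (2 * dhat)) :
    0 < Δ ∧ ts < tg ∧
    StrictAntiOn R (Set.Iic ts) ∧ StrictMonoOn R (Set.Icc ts tg) ∧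
    StrictAntiOn R (Set.Ici tg) ∧
    IsLocalMin R ts ∧ IsLocalMax R tg := by
  have hc₂ : 0 < c₂ := by simpa using hden 0
  have hdne : dhat ≠ 0 := ne_of_lt hdneg
  have hdisc : discrim a₂ b₂ c₂ ≤ 0 := by
    apply discrim_le_zero
    intro x
    nlinarith [hden x]
  rw [discrim] at hdisc
  have ha₂ : 0 < a₂ := by
    rcases lt_trichotomy a₂ 0 with h | h | h
    · nlinarith [sq_nonneg b₂]
    · have hb₂ : b₂ = 0 := by nlinarith [sq_nonneg b₂]
      rw [hd, h, hb₂] at hdneg; simp at hdneg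
    · exact h
  -- positivity of the discriminant
  have hΔ : 0 < Δ := by
    set t₀ : ℝ := -ehat / (2 * dhat) with ht₀
    have key : a₂ * Δ = a₂ * ehat ^ 2 - 2 * dhat * b₂ * ehat + 4 * dhat ^ 2 * c₂ := by
      rw [hΔdef, hd, he, hf]; ring
    have h2 : a₂ * ehat ^ 2 - 2 * dhat * b₂ * ehat + 4 * dhat ^ 2 * c₂
        = 4 * dhat ^ 2 * (a₂ * t₀ ^ 2 + b₂ * t₀ + c₂) := by
      rw [ht₀]; field_simp; ring
    have hpos : 0 < a₂ * Δ := by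
      rw [key, h2]
      have := hden t₀
      positivity
    by_contra h; push_neg at h; nlinarith
  have hsq : Real.sqrt Δ ^ 2 = Δ := Real.sq_sqrt hΔ.le
  have hs : 0 < Real.sqrt Δ := Real.sqrt_pos.mpr hΔ
  have hlt : ts < tg := by
    rw [hts, htg]
    have h2d : 2 * dhat < 0 := by linarith
    rw [div_lt_div_right_of_neg h2d]
    linarith
  -- the derivative of R
  have hderiv : ∀ x : ℝ,
      HasDerivAt R ((dhat * x ^ 2 + ehat * x + fhat) / (a₂ * x ^ 2 + b₂ * x + c₂) ^ 2) x := by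
    intro x
    have hN : HasDerivAt (fun t : ℝ => a₁ * t ^ 2 + b₁ * t + c₁) (2 * a₁ * x + b₁) x := by
      have := (((hasDerivAt_pow 2 x).const_mul a₁).add
        ((hasDerivAt_id x).const_mul b₁)).add_const c₁
      refine this.congr_deriv ?_
      simp; ring
    have hD : HasDerivAt (fun t : ℝ => a₂ * t ^ 2 + b₂ * t + c₂) (2 * a₂ * x + b₂) x := by
      have := (((hasDerivAt_pow 2 x).const_mul a₂).add
        ((hasDerivAt_id x).const_mul b₂)).add_const c₂
      refine this.congr_deriv ?_
      simp; ring
    have := hN.div hD (hden x).ne'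
    rw [hR]
    refine this.congr_deriv ?_
    rw [hd, he, hf]; ring
  have hdiff : Differentiable ℝ R := fun x => (hderiv x).differentiableAt
  have hderiv' : ∀ x : ℝ,
      deriv R x = (dhat * x ^ 2 + ehat * x + fhat) / (a₂ * x ^ 2 + b₂ * x + c₂) ^ 2 :=
    fun x => (hderiv x).deriv
  -- factorization of the numerator of the derivative
  have hfac : ∀ t : ℝ, dhat * t ^ 2 + ehat * t + fhat = dhat * (t - ts) * (t - tg) := by
    intro t
    rw [hts, htg]
    field_simp
    nlinarith [hsq, hΔdef]
  -- sign of the derivative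
  have hnegIio : ∀ x < ts, deriv R x < 0 := by
    intro x hx
    rw [hderiv', hfac]
    exact div_neg_of_neg_of_pos
      (mul_neg_of_pos_of_neg (mul_pos_of_neg_of_neg hdneg (by linarith)) (by linarith))
      (pow_pos (hden x) 2)
  have hposIoo : ∀ x, ts < x → x < tg → 0 < deriv R x := by
    intro x hx1 hx2
    rw [hderiv', hfac]
    exact div_pos
      (mul_pos_of_neg_of_neg (mul_neg_of_neg_of_pos hdneg (by linarith)) (by linarith))
      (pow_pos (hden x) 2)
  have hnegIoi : ∀ x, tg < x → deriv R x < 0 := by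
    intro x hx
    rw [hderiv', hfac]
    exact div_neg_of_neg_of_pos
      (mul_neg_of_neg_of_pos (mul_neg_of_neg_of_pos hdneg (by linarith)) (by linarith))
      (pow_pos (hden x) 2)
  have hanti1 : StrictAntiOn R (Set.Iic ts) := by
    apply strictAntiOn_of_deriv_neg (convex_Iic ts) hdiff.continuous.continuousOn
    intro x hx
    rw [interior_Iic] at hx
    exact hnegIio x hx
  have hmono : StrictMonoOn R (Set.Icc ts tg) := by
    apply strictMonoOn_of_deriv_pos (convex_Icc ts tg) hdiff.continuous.continuousOn
    intro x hx
    rw [interior_Icc] at hx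
    exact hposIoo x hx.1 hx.2
  have hanti2 : StrictAntiOn R (Set.Ici tg) := by
    apply strictAntiOn_of_deriv_neg (convex_Ici tg) hdiff.continuous.continuousOn
    intro x hx
    rw [interior_Ici] at hx
    exact hnegIoi x hx
  refine ⟨hΔ, hlt, hanti1, hmono, hanti2, ?_, ?_⟩
  · -- local min at ts
    filter_upwards [Ioo_mem_nhds (by linarith : ts - 1 < ts) hlt] with x hx
    rcases le_or_gt x ts with h | h
    · rcases eq_or_lt_of_le h with rfl | h'
      · exact le_refl _
      · exact (hanti1 (le_of_lt h') (le_refl ts) h').le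
    · exact (hmono ⟨le_refl ts, hlt.le⟩ ⟨h.le, hx.2.le⟩ h).le
  · -- local max at tg
    filter_upwards [Ioo_mem_nhds hlt (by linarith : tg < tg + 1)] with x hx
    rcases le_or_gt x tg with h | h
    · rcases eq_or_lt_of_le h with rfl | h'
      · exact le_refl _
      · exact (hmono ⟨hx.1.le, h'.le⟩ ⟨hlt.le, le_refl tg⟩ h').le
    · exact (hanti2 (le_refl tg) h.le h).le
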